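/- arXiv:1812.08485 — 2 statements merged into one kernel-verified Lean document; each statement's English description precedes it below -/
import Mathlib

section
/- Let f : ℝⁿ → ℝ be convex and differentiable with componentwise Lipschitz constants L₁,…,Lₙ > 0, let ψ(x) = ∑_{i=1}^n ψᵢ(xᵢ) with each ψᵢ : ℝ → ℝ convex, and set F = f + ψ with nonempty minimizer set Ω and F* = min F. Fix L̄ᵢ ≥ Lᵢ, let p₁,…,pₙ be probabilities with pᵢ ≥ p_min > 0 and ∑pᵢ = 1, let indices i₀, i₁, … be drawn i.i.d. from this distribution, and define the proximal coordinate descent iterates x_{k+1} = x_k + d^k_{i_k} e_{i_k}, where d^k_i is the minimizer over d ∈ ℝ of ∇ᵢ f(x_k)·d + (L̄ᵢ/2)d² + ψᵢ((x_k)ᵢ + d). Then k·(E[F(x_k)] − F*) → 0, where E is the expectation over the random indices; moreover, for any minimizer x̄ of F, the sequence E[∑_{i=1}^n (L̄ᵢ/pᵢ)((x_k)ᵢ − x̄ᵢ)²] is bounded. -/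
/-- The random trajectory of a coordinate-type method: `traj step x0 k ι` is the
`k`-th iterate obtained from `x0` when the coordinates chosen at iterations
`0, …, k−1` are `ι 0, …, ι (k−1)`. -/
def traj {E : Type*} {n : ℕ} (step : E → Fin n → E) (x0 : E) :
    ∀ k : ℕ, (Fin k → Fin n) → E
  | 0, _ => x0
  | k + 1, ι => step (traj step x0 k fun t => ι t.castSucc) (ι (Fin.last k))

open Filter Set

-- 1D descent lemma
lemma aux_descent_1d (g g' : ℝ → ℝ) (hg : ∀ t, HasDerivAt g (g' t) t)
    (L : ℝ) (hlip : ∀ t, |g' t - g' 0| ≤ L * |t|) (h : ℝ) :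
    g h ≤ g 0 + g' 0 * h + L / 2 * h ^ 2 := by
  set φ : ℝ → ℝ := fun t => g 0 + g' 0 * t + L / 2 * t ^ 2 - g t with hφdef
  have hφd : ∀ t, HasDerivAt φ (g' 0 + L * t - g' t) t := by
    intro t
    have h1 : HasDerivAt (fun t : ℝ => g 0 + g' 0 * t + L / 2 * t ^ 2)
        (g' 0 + L * t) t := by
      have : HasDerivAt (fun t : ℝ => g 0 + g' 0 * t + L / 2 * t ^ 2)
          (0 + g' 0 * 1 + L / 2 * (2 * t)) t := by
        exact ((hasDerivAt_const t (g 0)).add ((hasDerivAt_id t).const_mul (g' 0))).add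
          (((hasDerivAt_pow 2 t).const_mul (L/2)).congr_deriv (by ring))
      convert this using 1; ring
    exact h1.sub (hg t)
  have key : 0 ≤ φ h := by
    rcases le_or_gt 0 h with hh | hh
    · have mono : MonotoneOn φ (Icc 0 h) := by
        apply monotoneOn_of_deriv_nonneg (convex_Icc 0 h)
        · exact fun t _ => ((hφd t).differentiableAt).continuousAt.continuousWithinAt
        · exact fun t _ => ((hφd t).differentiableAt).differentiableWithinAt
        · intro t ht
          rw [(hφd t).deriv]
          have ht' : 0 ≤ t := by
            rcases ht with ht
            simp [interior_Icc] at ht; linarith [ht.1]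
          have := (abs_le.mp (hlip t)).2
          rw [abs_of_nonneg ht'] at this
          linarith
      have := mono (left_mem_Icc.mpr hh) (right_mem_Icc.mpr hh) hh
      simpa [hφdef] using this
    · have mono : AntitoneOn φ (Icc h 0) := by
        apply antitoneOn_of_deriv_nonpos (convex_Icc h 0)
        · exact fun t _ => ((hφd t).differentiableAt).continuousAt.continuousWithinAt
        · exact fun t _ => ((hφd t).differentiableAt).differentiableWithinAt
        · intro t ht
          rw [(hφd t).deriv]
          have ht' : t ≤ 0 := by
            simp [interior_Icc] at ht; linarith [ht.2]
          have := (abs_le.mp (hlip t)).1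
          rw [abs_of_nonpos ht'] at this
          linarith
      have := mono (left_mem_Icc.mpr hh.le) (right_mem_Icc.mpr hh.le) hh.le
      simpa [hφdef] using this
  simp only [hφdef] at key
  linarith

lemma aux_min_of_approx (g : ℝ → ℝ)
    (hconvg : ∀ x y l : ℝ, 0 ≤ l → l ≤ 1 → g ((1 - l) * x + l * y) ≤ (1 - l) * g x + l * g y)
    (μ : ℝ) (hμ : 0 < μ) (d : ℝ)
    (h : ∀ t, g d ≤ g t + μ / 2 * (t - d) ^ 2) (t : ℝ) : g d ≤ g t := by
  rcases eq_or_ne t d with rfl | htd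
  · exact le_rfl
  · have hsub : t - d ≠ 0 := sub_ne_zero.mpr htd
    have hsq : 0 < (t - d) ^ 2 := by positivity
    apply le_of_forall_pos_le_add
    intro ε hε
    set lam : ℝ := min 1 (ε / (μ / 2 * (t - d) ^ 2)) with hlam
    have hlam0 : 0 < lam := lt_min one_pos (by positivity)
    have hlam1 : lam ≤ 1 := min_le_left _ _
    have hs := h ((1 - lam) * d + lam * t)
    have hexp : ((1 - lam) * d + lam * t - d) ^ 2 = lam ^ 2 * (t - d) ^ 2 := by ring
    rw [hexp] at hs
    have hc := hconvg d t lam hlam0.le hlam1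
    have h3 : lam * (g d - g t) ≤ μ / 2 * lam ^ 2 * (t - d) ^ 2 := by nlinarith
    have h4 : g d - g t ≤ μ / 2 * lam * (t - d) ^ 2 := by
      calc g d - g t = lam⁻¹ * (lam * (g d - g t)) := by field_simp
        _ ≤ lam⁻¹ * (μ / 2 * lam ^ 2 * (t - d) ^ 2) :=
            mul_le_mul_of_nonneg_left h3 (inv_pos.mpr hlam0).le
        _ = μ / 2 * lam * (t - d) ^ 2 := by field_simp
    have h5 : μ / 2 * lam * (t - d) ^ 2 ≤ ε := by
      have hle : lam ≤ ε / (μ / 2 * (t - d) ^ 2) := min_le_right _ _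
      have hpos : 0 < μ / 2 * (t - d) ^ 2 := by positivity
      calc μ / 2 * lam * (t - d) ^ 2 = lam * (μ / 2 * (t - d) ^ 2) := by ring
        _ ≤ ε / (μ / 2 * (t - d) ^ 2) * (μ / 2 * (t - d) ^ 2) :=
            mul_le_mul_of_nonneg_right hle hpos.le
        _ = ε := by field_simp
    linarith

lemma aux_strong_min (μ a c : ℝ) (hμ : 0 < μ) (ψ : ℝ → ℝ)
    (hψ : ConvexOn ℝ Set.univ ψ) (d : ℝ)
    (hd : ∀ t, a * d + μ / 2 * d ^ 2 + ψ (c + d) ≤ a * t + μ / 2 * t ^ 2 + ψ (c + t))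
    (t : ℝ) :
    a * d + μ / 2 * d ^ 2 + ψ (c + d) + μ / 2 * (t - d) ^ 2 ≤
      a * t + μ / 2 * t ^ 2 + ψ (c + t) := by
  have key : (a + μ * d) * d + ψ (c + d) ≤ (a + μ * d) * t + ψ (c + t) := by
    apply aux_min_of_approx (fun s => (a + μ * d) * s + ψ (c + s)) _ μ hμ d
      (fun u => by have := hd u; nlinarith [hd u]) t
    intro x y l hl0 hl1
    have hψc : ψ (c + ((1 - l) * x + l * y)) ≤ (1 - l) * ψ (c + x) + l * ψ (c + y) := by
      have h := hψ.2 (mem_univ (c + x)) (mem_univ (c + y))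
        (show (0:ℝ) ≤ 1 - l by linarith) hl0 (show (1 - l) + l = 1 by ring)
      simp only [smul_eq_mul] at h
      have e1 : (1 - l) * (c + x) + l * (c + y) = c + ((1 - l) * x + l * y) := by ring
      rw [e1] at h
      exact h
    nlinarith [hψc]
  nlinarith [key]

lemma aux_mul_tendsto_zero (a : ℕ → ℝ) (h0 : ∀ k, 0 ≤ a k) (hmono : ∀ k, a (k + 1) ≤ a k)
    (C : ℝ) (hC : ∀ k, ∑ j ∈ Finset.range k, a j ≤ C) :
    Filter.Tendsto (fun k : ℕ => (k : ℝ) * a k) Filter.atTop (nhds 0) := by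
  have hanti : Antitone a := antitone_nat_of_succ_le hmono
  have hsum : Summable a := summable_of_sum_range_le h0 hC
  rw [Metric.tendsto_atTop]
  intro ε hε
  have htail : Filter.Tendsto (fun N => ∑' j, a (j + N)) Filter.atTop (nhds 0) :=
    tendsto_sum_nat_add a
  obtain ⟨N, hN⟩ := (Metric.tendsto_atTop.mp htail) (ε / 2) (by positivity)
  have haz : Filter.Tendsto a Filter.atTop (nhds 0) := hsum.tendsto_atTop_zero
  obtain ⟨M, hM⟩ := (Metric.tendsto_atTop.mp haz) (ε / (2 * (N + 1))) (by positivity)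
  refine ⟨max N M, fun k hk => ?_⟩
  have hkN : N ≤ k := le_trans (le_max_left _ _) hk
  have hkM : M ≤ k := le_trans (le_max_right _ _) hk
  have hsumtail : Summable (fun j => a (j + N)) := (summable_nat_add_iff N).mpr hsum
  have h1 : ((k : ℝ) - N) * a k < ε / 2 := by
    have hsub : ∑ i ∈ Finset.range (k - N), a (i + N) ≤ ∑' j, a (j + N) :=
      Summable.sum_le_tsum _ (fun i _ => h0 _) hsumtail
    have hlow : ((k - N : ℕ) : ℝ) * a k ≤ ∑ i ∈ Finset.range (k - N), a (i + N) := by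
      calc ((k - N : ℕ) : ℝ) * a k = ∑ _i ∈ Finset.range (k - N), a k := by
            rw [Finset.sum_const, Finset.card_range, nsmul_eq_mul]
        _ ≤ _ := Finset.sum_le_sum (fun i hi => hanti (by
            have := Finset.mem_range.mp hi; omega))
    have htail' : ∑' j, a (j + N) < ε / 2 := by
      have := hN N le_rfl
      rwa [Real.dist_eq, sub_zero, abs_of_nonneg (tsum_nonneg (fun j => h0 _))] at this
    have hcast : ((k - N : ℕ) : ℝ) = (k : ℝ) - N := by
      rw [Nat.cast_sub hkN]
    rw [hcast] at hlow
    linarith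
  have h2 : (N : ℝ) * a k ≤ ε / 2 := by
    have hak := hM k hkM
    rw [Real.dist_eq, sub_zero, abs_of_nonneg (h0 k)] at hak
    have hN1 : (0 : ℝ) < 2 * ((N : ℝ) + 1) := by positivity
    calc (N : ℝ) * a k ≤ (N : ℝ) * (ε / (2 * (N + 1))) :=
          mul_le_mul_of_nonneg_left hak.le (Nat.cast_nonneg N)
      _ ≤ ε / 2 := by
          have h3 : (N : ℝ) * (ε / (2 * (N + 1))) ≤ ((N : ℝ) + 1) * (ε / (2 * (N + 1))) :=
            mul_le_mul_of_nonneg_right (by linarith) (by positivity)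
          have h4 : ((N : ℝ) + 1) * (ε / (2 * (N + 1))) = ε / 2 := by
            field_simp
          linarith
  rw [Real.dist_eq, sub_zero, abs_of_nonneg (mul_nonneg (Nat.cast_nonneg k) (h0 k))]
  have hsplit : (k : ℝ) * a k = ((k : ℝ) - N) * a k + N * a k := by ring
  linarith

lemma aux_hasDerivAt_line {n : ℕ} (f : EuclideanSpace ℝ (Fin n) → ℝ)
    (f' : EuclideanSpace ℝ (Fin n) → EuclideanSpace ℝ (Fin n))
    (hderiv : ∀ y, HasGradientAt f (f' y) y) (z v : EuclideanSpace ℝ (Fin n)) (t : ℝ) :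
    HasDerivAt (fun s : ℝ => f (z + s • v)) (inner ℝ (f' (z + t • v)) v) t := by
  have hc : HasDerivAt (fun s : ℝ => z + s • v) v t := by
    simpa using ((hasDerivAt_id t).smul_const v).const_add z
  have hf := (hderiv (z + t • v)).hasFDerivAt
  have hcomp := hf.comp_hasDerivAt t hc
  simp [InnerProductSpace.toDual_apply_apply] at hcomp
  exact hcomp

lemma aux_grad_convex {n : ℕ} (f : EuclideanSpace ℝ (Fin n) → ℝ)
    (f' : EuclideanSpace ℝ (Fin n) → EuclideanSpace ℝ (Fin n))
    (hconv : ConvexOn ℝ Set.univ f)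
    (hderiv : ∀ y, HasGradientAt f (f' y) y) (z w : EuclideanSpace ℝ (Fin n)) :
    inner ℝ (f' z) (w - z) ≤ f w - f z := by
  have hline := aux_hasDerivAt_line f f' hderiv z (w - z) 0
  rw [zero_smul, add_zero] at hline
  have hslope : Tendsto (slope (fun s : ℝ => f (z + s • (w - z))) 0) (nhdsWithin 0 (Set.Ioi 0))
      (nhds (inner ℝ (f' z) (w - z))) :=
    (hasDerivAt_iff_tendsto_slope.mp hline).mono_left
      (nhdsWithin_mono _ (fun x hx => ne_of_gt hx))
  refine le_of_tendsto hslope ?_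
  filter_upwards [Ioo_mem_nhdsGT_of_mem (left_mem_Ico.mpr one_pos)] with t ht
  rw [slope_def_field]
  have hid : z + t • (w - z) = (1 - t) • z + t • w := by module
  have hcv : f (z + t • (w - z)) ≤ (1 - t) * f z + t * f w := by
    rw [hid]
    have h := hconv.2 (mem_univ z) (mem_univ w)
      (show (0:ℝ) ≤ 1 - t by linarith [ht.2]) ht.1.le
      (show (1 - t) + t = 1 by ring)
    simpa [smul_eq_mul] using h
  have hz0 : z + (0:ℝ) • (w - z) = z := by simp
  rw [hz0, sub_zero, div_le_iff₀ ht.1]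
  nlinarith [hcv]

def auxSnocE (k n : ℕ) : ((Fin k → Fin n) × Fin n) ≃ (Fin (k + 1) → Fin n) where
  toFun q := Fin.snoc q.1 q.2
  invFun ι := (fun t => ι t.castSucc, ι (Fin.last k))
  left_inv q := by
    refine Prod.ext ?_ ?_
    · funext t; simp [Fin.snoc_castSucc]
    · simp [Fin.snoc_last]
  right_inv ι := Fin.snoc_init_self ι

lemma aux_traj_sum_succ {E : Type*} {n : ℕ} (p : Fin n → ℝ) (step : E → Fin n → E)
    (x0 : E) (g : E → ℝ) (k : ℕ) :
    ∑ ι : Fin (k + 1) → Fin n, (∏ t, p (ι t)) * g (traj step x0 (k + 1) ι)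
      = ∑ ι : Fin k → Fin n, (∏ t, p (ι t)) * ∑ i, p i * g (step (traj step x0 k ι) i) := by
  rw [← Equiv.sum_comp (auxSnocE k n)
    (fun ι => (∏ t, p (ι t)) * g (traj step x0 (k + 1) ι))]
  simp only [auxSnocE, Equiv.coe_fn_mk]
  rw [Fintype.sum_prod_type]
  refine Finset.sum_congr rfl (fun ι _ => ?_)
  rw [Finset.mul_sum]
  refine Finset.sum_congr rfl (fun i _ => ?_)
  have hprod : (∏ t, p ((Fin.snoc ι i : Fin (k+1) → Fin n) t)) = (∏ t, p (ι t)) * p i := by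
    rw [Fin.prod_univ_castSucc]
    congr 1
    · exact Finset.prod_congr rfl (fun t _ => by rw [Fin.snoc_castSucc])
    · rw [Fin.snoc_last]
  have htraj : traj step x0 (k + 1) (Fin.snoc ι i : Fin (k+1) → Fin n) = step (traj step x0 k ι) i := by
    show step (traj step x0 k fun t => (Fin.snoc ι i : Fin (k+1) → Fin n) t.castSucc) ((Fin.snoc ι i : Fin (k+1) → Fin n) (Fin.last k))
      = step (traj step x0 k ι) i
    congr 1
    · congr 1; funext t; simp [Fin.snoc_castSucc]
    · simp [Fin.snoc_last]
  show (∏ t, p ((Fin.snoc ι i : Fin (k+1) → Fin n) t)) * g (traj step x0 (k + 1) (Fin.snoc ι i : Fin (k+1) → Fin n)) = _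
  rw [hprod, htraj]
  ring

lemma aux_weight_sum {n : ℕ} (p : Fin n → ℝ) (hpsum : ∑ i, p i = 1) (k : ℕ) :
    ∑ ι : Fin k → Fin n, (∏ t, p (ι t)) = 1 := by
  induction k with
  | zero => simp
  | succ k ih =>
    have h := aux_traj_sum_succ p (fun (z : Unit) _ => z) () (fun _ => 1) k
    simpa [hpsum, ih] using h

lemma aux_sum_affine {α : Type*} [Fintype α] (w X Y : α → ℝ) (hW : ∑ a, w a = 1) (c e : ℝ) :
    ∑ a, w a * (X a + c * Y a + e) = (∑ a, w a * X a) + c * (∑ a, w a * Y a) + e := by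
  calc ∑ a, w a * (X a + c * Y a + e)
      = ∑ a, (w a * X a + c * (w a * Y a) + e * w a) :=
        Finset.sum_congr rfl (fun a _ => by ring)
    _ = (∑ a, w a * X a) + c * (∑ a, w a * Y a) + e * ∑ a, w a := by
        rw [Finset.sum_add_distrib, Finset.sum_add_distrib, ← Finset.mul_sum, ← Finset.mul_sum]
    _ = _ := by rw [hW]; ring

lemma aux_main {E : Type*} {n : ℕ} (p : Fin n → ℝ) (stepF : E → Fin n → E) (x0 : E)
    (F R : E → ℝ) (Fstar pmin : ℝ) (hpmin : 0 < pmin)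
    (hp0 : ∀ i, 0 ≤ p i) (hpsum : ∑ i, p i = 1)
    (hFge : ∀ z, Fstar ≤ F z) (hR0 : ∀ z, 0 ≤ R z)
    (hdesc : ∀ z, ∑ i, p i * F (stepF z i) ≤ F z)
    (hlyap : ∀ z, ∑ i, p i * R (stepF z i) + (2 / pmin) * ((∑ i, p i * F (stepF z i)) - Fstar)
      ≤ R z + (2 / pmin) * (F z - Fstar) - 2 * (F z - Fstar)) :
    Filter.Tendsto (fun k : ℕ => (k : ℝ) *
        ((∑ ι : Fin k → Fin n, (∏ t, p (ι t)) * F (traj stepF x0 k ι)) - Fstar))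
      Filter.atTop (nhds 0) ∧
    ∃ C : ℝ, ∀ k : ℕ,
      (∑ ι : Fin k → Fin n, (∏ t, p (ι t)) * R (traj stepF x0 k ι)) ≤ C := by
  classical
  have hw0 : ∀ (k : ℕ) (ι : Fin k → Fin n), 0 ≤ ∏ t, p (ι t) :=
    fun k ι => Finset.prod_nonneg (fun t _ => hp0 _)
  have hW : ∀ k : ℕ, ∑ ι : Fin k → Fin n, (∏ t, p (ι t)) = 1 := aux_weight_sum p hpsum
  set A : ℕ → ℝ := fun k => ∑ ι : Fin k → Fin n, (∏ t, p (ι t)) * F (traj stepF x0 k ι)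
    with hA
  set Rk : ℕ → ℝ := fun k => ∑ ι : Fin k → Fin n, (∏ t, p (ι t)) * R (traj stepF x0 k ι)
    with hRk
  have hAge : ∀ k, Fstar ≤ A k := by
    intro k
    have h1 : ∑ ι : Fin k → Fin n, (∏ t, p (ι t)) * Fstar ≤ A k :=
      Finset.sum_le_sum (fun ι _ => mul_le_mul_of_nonneg_left (hFge _) (hw0 k ι))
    rwa [← Finset.sum_mul, hW, one_mul] at h1
  have hRge : ∀ k, 0 ≤ Rk k :=
    fun k => Finset.sum_nonneg (fun ι _ => mul_nonneg (hw0 k ι) (hR0 _))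
  have hAmono : ∀ k, A (k + 1) ≤ A k := by
    intro k
    calc A (k + 1)
        = ∑ ι : Fin k → Fin n, (∏ t, p (ι t)) *
            ∑ i, p i * F (stepF (traj stepF x0 k ι) i) :=
          aux_traj_sum_succ p stepF x0 F k
      _ ≤ A k :=
          Finset.sum_le_sum (fun ι _ => mul_le_mul_of_nonneg_left (hdesc _) (hw0 k ι))
  have hV : ∀ k, Rk (k + 1) + (2 / pmin) * (A (k + 1) - Fstar)
      ≤ Rk k + (2 / pmin) * (A k - Fstar) - 2 * (A k - Fstar) := by
    intro k
    have hRk1 : Rk (k + 1) = ∑ ι : Fin k → Fin n, (∏ t, p (ι t)) *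
        ∑ i, p i * R (stepF (traj stepF x0 k ι) i) := aux_traj_sum_succ p stepF x0 R k
    have hA1 : A (k + 1) = ∑ ι : Fin k → Fin n, (∏ t, p (ι t)) *
        ∑ i, p i * F (stepF (traj stepF x0 k ι) i) := aux_traj_sum_succ p stepF x0 F k
    have e1 : Rk (k + 1) + (2 / pmin) * (A (k + 1) - Fstar)
        = ∑ ι : Fin k → Fin n, (∏ t, p (ι t)) *
            ((∑ i, p i * R (stepF (traj stepF x0 k ι) i))
              + (2 / pmin) * (∑ i, p i * F (stepF (traj stepF x0 k ι) i))
              + (-(2 / pmin) * Fstar)) := by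
      rw [aux_sum_affine _ _ _ (hW k), hRk1, hA1]; ring
    have e2 : Rk k + (2 / pmin) * (A k - Fstar) - 2 * (A k - Fstar)
        = ∑ ι : Fin k → Fin n, (∏ t, p (ι t)) *
            (R (traj stepF x0 k ι) + (2 / pmin - 2) * F (traj stepF x0 k ι)
              + (-(2 / pmin - 2) * Fstar)) := by
      rw [aux_sum_affine _ _ _ (hW k)]
      simp only [hA, hRk]
      ring
    rw [e1, e2]
    refine Finset.sum_le_sum (fun ι _ => mul_le_mul_of_nonneg_left ?_ (hw0 k ι))
    have := hlyap (traj stepF x0 k ι)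
    linarith
  have hVtel : ∀ k, Rk k + (2 / pmin) * (A k - Fstar)
      + 2 * ∑ j ∈ Finset.range k, (A j - Fstar)
      ≤ Rk 0 + (2 / pmin) * (A 0 - Fstar) := by
    intro k
    induction k with
    | zero => simp
    | succ k ih =>
      rw [Finset.sum_range_succ]
      have := hV k
      linarith
  have hsum_bound : ∀ k, ∑ j ∈ Finset.range k, (A j - Fstar)
      ≤ (Rk 0 + (2 / pmin) * (A 0 - Fstar)) / 2 := by
    intro k
    have h1 := hVtel k
    have h2 := hRge k
    have h3 := hAge k
    have h4 : 0 ≤ (2 / pmin) * (A k - Fstar) :=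
      mul_nonneg (by positivity) (by linarith)
    linarith
  constructor
  · exact aux_mul_tendsto_zero (fun k => A k - Fstar)
      (fun k => by simpa using sub_nonneg.mpr (hAge k))
      (fun k => by simpa using sub_le_sub_right (hAmono k) Fstar)
      _ hsum_bound
  · refine ⟨Rk 0 + (2 / pmin) * (A 0 - Fstar), fun k => ?_⟩
    have h1 := hVtel k
    have h3 := hAge k
    have h4 : 0 ≤ (2 / pmin) * (A k - Fstar) :=
      mul_nonneg (by positivity) (by linarith)
    have h5 : 0 ≤ ∑ j ∈ Finset.range k, (A j - Fstar) :=
      Finset.sum_nonneg (fun j _ => by have := hAge j; linarith)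
    linarith

noncomputable def stepD {n : ℕ} (D : EuclideanSpace ℝ (Fin n) → Fin n → ℝ) :
    EuclideanSpace ℝ (Fin n) → Fin n → EuclideanSpace ℝ (Fin n) :=
  fun z i => z + D z i • EuclideanSpace.single i 1


set_option maxHeartbeats 2000000 in
/-- **Theorem 6 of the paper.** Stochastic proximal coordinate
descent on `F = f + ψ` with separable convex `ψ` and i.i.d. coordinate sampling
satisfies `E[F(x_k)] − F* = o(1/k)`; moreover, for every minimizer `x̄` of `F`,
the sequence `E[∑ᵢ (L̄ᵢ/pᵢ)((x_k)ᵢ − x̄ᵢ)²]` is bounded. -/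
theorem proximal_coordinate_descent_o_one_div_k
    {n : ℕ}
    (f : EuclideanSpace ℝ (Fin n) → ℝ)
    (f' : EuclideanSpace ℝ (Fin n) → EuclideanSpace ℝ (Fin n))
    (hconv : ConvexOn ℝ Set.univ f)
    (hderiv : ∀ y, HasGradientAt f (f' y) y)
    (Li : Fin n → ℝ) (hLi : ∀ i, 0 < Li i)
    (hcoordlip : ∀ (y : EuclideanSpace ℝ (Fin n)) (i : Fin n) (h : ℝ),
      |f' (y + h • EuclideanSpace.single i 1) i - f' y i| ≤ Li i * |h|)
    (Lbar : Fin n → ℝ) (hLbar : ∀ i, Li i ≤ Lbar i)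
    (ψ : Fin n → ℝ → ℝ) (hψconv : ∀ i, ConvexOn ℝ Set.univ (ψ i))
    (F : EuclideanSpace ℝ (Fin n) → ℝ) (hF : ∀ y, F y = f y + ∑ i, ψ i (y i))
    (xstar : EuclideanSpace ℝ (Fin n)) (hxstar : ∀ y, F xstar ≤ F y)
    (p : Fin n → ℝ) (pmin : ℝ) (hpmin : 0 < pmin)
    (hp : ∀ i, pmin ≤ p i) (hpsum : ∑ i, p i = 1)
    (D : EuclideanSpace ℝ (Fin n) → Fin n → ℝ)
    (hD : ∀ z i, ∀ t : ℝ,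
      f' z i * D z i + Lbar i / 2 * D z i ^ 2 + ψ i (z i + D z i) ≤
        f' z i * t + Lbar i / 2 * t ^ 2 + ψ i (z i + t))
    (x0 : EuclideanSpace ℝ (Fin n)) :
    Filter.Tendsto
      (fun k : ℕ => (k : ℝ) *
        ((∑ ι : Fin k → Fin n, (∏ t, p (ι t)) *
            F (traj (fun z i => z + D z i • EuclideanSpace.single i 1)
                x0 k ι)) - F xstar))
      Filter.atTop (nhds 0) ∧
    ∀ xbar : EuclideanSpace ℝ (Fin n), (∀ y, F xbar ≤ F y) →
      ∃ C : ℝ, ∀ k : ℕ,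
        (∑ ι : Fin k → Fin n, (∏ t, p (ι t)) *
          ∑ i, Lbar i / p i *
            ((traj (fun z i => z + D z i • EuclideanSpace.single i 1)
                x0 k ι) i - xbar i) ^ 2) ≤ C := by
    classical
  have hp0 : ∀ i, 0 ≤ p i := fun i => le_trans hpmin.le (hp i)
  have hppos : ∀ i, 0 < p i := fun i => lt_of_lt_of_le hpmin (hp i)
  have hLbarpos : ∀ i, 0 < Lbar i := fun i => lt_of_lt_of_le (hLi i) (hLbar i)
  have happly : ∀ (z : EuclideanSpace ℝ (Fin n)) (i : Fin n) (d : ℝ) (j : Fin n),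
      ((z + d • EuclideanSpace.single i 1 : EuclideanSpace ℝ (Fin n))) j = if j = i then z i + d else z j := by
    intro z i d j
    simp only [PiLp.add_apply, PiLp.smul_apply, EuclideanSpace.single_apply, smul_eq_mul]
    by_cases h : j = i
    · subst h; simp
    · simp [h]
  have hfdesc : ∀ (z : EuclideanSpace ℝ (Fin n)) (i : Fin n) (d : ℝ),
      f (z + d • EuclideanSpace.single i 1) ≤ f z + f' z i * d + Li i / 2 * d ^ 2 := by
    intro z i d
    have hg : ∀ t : ℝ, HasDerivAt (fun s : ℝ => f (z + s • EuclideanSpace.single i 1))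
        ((fun t : ℝ => f' (z + t • EuclideanSpace.single i 1) i) t) t := by
      intro t
      have h := aux_hasDerivAt_line f f' hderiv z (EuclideanSpace.single i 1) t
      have hinner : (inner ℝ (f' (z + t • EuclideanSpace.single i 1))
          (EuclideanSpace.single i 1))
          = f' (z + t • EuclideanSpace.single i 1) i := by
        rw [EuclideanSpace.inner_single_right]; simp
      rwa [hinner] at h
    have h0 : z + (0 : ℝ) • EuclideanSpace.single i 1 = z := by simp
    have hlip : ∀ t : ℝ, |(fun t : ℝ => f' (z + t • EuclideanSpace.single i 1) i) t
        - (fun t : ℝ => f' (z + t • EuclideanSpace.single i 1) i) 0| ≤ Li i * |t| := by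
      intro t
      simp only [h0]
      exact hcoordlip z i t
    have hd := aux_descent_1d (fun s : ℝ => f (z + s • EuclideanSpace.single i 1))
      (fun t : ℝ => f' (z + t • EuclideanSpace.single i 1) i) hg (Li i) hlip d
    simp only [h0] at hd
    exact hd
  have hpsisum : ∀ (z : EuclideanSpace ℝ (Fin n)) (i : Fin n) (d : ℝ),
      ∑ j, ψ j (((z + d • EuclideanSpace.single i 1 : EuclideanSpace ℝ (Fin n))) j)
        = (∑ j, ψ j (z j)) + (ψ i (z i + d) - ψ i (z i)) := by
    intro z i d
    have hterm : ∀ j, ψ j (((z + d • EuclideanSpace.single i 1 : EuclideanSpace ℝ (Fin n))) j)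
        = ψ j (z j) + (if j = i then ψ i (z i + d) - ψ i (z i) else 0) := by
      intro j
      rw [happly]
      by_cases h : j = i
      · subst h; simp
      · simp [h]
    rw [Finset.sum_congr rfl (fun j _ => hterm j), Finset.sum_add_distrib,
      Finset.sum_ite_eq' Finset.univ i (fun _ => ψ i (z i + d) - ψ i (z i))]
    simp
  have hFstep : ∀ (z : EuclideanSpace ℝ (Fin n)) (i : Fin n),
      F (stepD D z i) ≤ F z + (f' z i * D z i + Lbar i / 2 * D z i ^ 2
        + ψ i (z i + D z i) - ψ i (z i)) := by
    intro z i
    show F (z + D z i • EuclideanSpace.single i 1) ≤ _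
    rw [hF, hF, hpsisum]
    have h1 := hfdesc z i (D z i)
    have h2 : Li i / 2 * D z i ^ 2 ≤ Lbar i / 2 * D z i ^ 2 := by
      apply mul_le_mul_of_nonneg_right _ (sq_nonneg _)
      linarith [hLbar i]
    linarith
  have hDelta0 : ∀ (z : EuclideanSpace ℝ (Fin n)) (i : Fin n),
      f' z i * D z i + Lbar i / 2 * D z i ^ 2 + ψ i (z i + D z i) - ψ i (z i) ≤ 0 := by
    intro z i
    have h := hD z i 0
    simp only [mul_zero, ne_eq, OfNat.ofNat_ne_zero, not_false_eq_true, zero_pow,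
      add_zero] at h
    linarith
  have hdesc : ∀ z, ∑ i, p i * F (stepD D z i) ≤ F z := by
    intro z
    have h1 : ∑ i, p i * F (stepD D z i) ≤ ∑ i, p i * F z := by
      refine Finset.sum_le_sum (fun i _ => ?_)
      refine mul_le_mul_of_nonneg_left ?_ (hp0 i)
      have := hFstep z i
      have := hDelta0 z i
      linarith
    have h3 : ∑ i, p i * F z = F z := by rw [← Finset.sum_mul, hpsum, one_mul]
    linarith
  have hR0 : ∀ (xbar z : EuclideanSpace ℝ (Fin n)),
      0 ≤ ∑ j, Lbar j / p j * (z j - xbar j) ^ 2 :=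
    fun xbar z => Finset.sum_nonneg fun j _ =>
      mul_nonneg (div_nonneg (hLbarpos j).le (hp0 j)) (sq_nonneg _)
  have hlyap : ∀ (xbar : EuclideanSpace ℝ (Fin n)), (∀ y, F xbar ≤ F y) →
      ∀ z, (∑ i, p i * (∑ j, Lbar j / p j * ((stepD D z i) j - xbar j) ^ 2))
        + (2 / pmin) * ((∑ i, p i * F (stepD D z i)) - F xstar)
        ≤ (∑ j, Lbar j / p j * (z j - xbar j) ^ 2)
          + (2 / pmin) * (F z - F xstar) - 2 * (F z - F xstar) := by
    intro xbar hxbar z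
    have hFxbar : F xbar = F xstar := le_antisymm (hxbar xstar) (hxstar xbar)
    -- per-coordinate strong minimality
    have hper : ∀ i, Lbar i * (D z i ^ 2 + D z i * (z i - xbar i))
        ≤ f' z i * (xbar i - z i) + ψ i (xbar i) - ψ i (z i)
          - (f' z i * D z i + ψ i (z i + D z i) - ψ i (z i)) := by
      intro i
      have h := aux_strong_min (Lbar i) (f' z i) (z i) (hLbarpos i) (ψ i) (hψconv i)
        (D z i) (hD z i) (xbar i - z i)
      have hz : z i + (xbar i - z i) = xbar i := by ring
      rw [hz] at h
      nlinarith [h]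
    have hgrad : ∑ i, f' z i * (xbar i - z i) ≤ f xbar - f z := by
      have h := aux_grad_convex f f' hconv hderiv z xbar
      have hi : inner ℝ (f' z) (xbar - z) = ∑ i, f' z i * (xbar i - z i) := by
        rw [PiLp.inner_apply]
        refine Finset.sum_congr rfl (fun i _ => ?_)
        simp [PiLp.sub_apply]; ring
      rw [hi] at h
      linarith
    have hsum1 : ∑ i, Lbar i * (D z i ^ 2 + D z i * (z i - xbar i))
        ≤ F xstar - F z - ∑ i, (f' z i * D z i + ψ i (z i + D z i) - ψ i (z i)) := by
      have h1 := Finset.sum_le_sum (fun i (_ : i ∈ Finset.univ) => hper i)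
      have hsplit : ∑ i, (f' z i * (xbar i - z i) + ψ i (xbar i) - ψ i (z i)
          - (f' z i * D z i + ψ i (z i + D z i) - ψ i (z i)))
          = (∑ i, f' z i * (xbar i - z i)) + (∑ i, ψ i (xbar i)) - (∑ i, ψ i (z i))
            - ∑ i, (f' z i * D z i + ψ i (z i + D z i) - ψ i (z i)) := by
        rw [Finset.sum_sub_distrib, Finset.sum_sub_distrib, Finset.sum_add_distrib]
      rw [hsplit] at h1
      have hFz := hF z
      have hFxb := hF xbar
      linarith
    -- expected R after one step
    have hRstep : ∑ i, p i * (∑ j, Lbar j / p j * ((stepD D z i) j - xbar j) ^ 2)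
        = (∑ j, Lbar j / p j * (z j - xbar j) ^ 2)
          + ∑ i, Lbar i * (2 * D z i * (z i - xbar i) + D z i ^ 2) := by
      have hsingle : ∀ i, ∑ j, Lbar j / p j * ((stepD D z i) j - xbar j) ^ 2
          = (∑ j, Lbar j / p j * (z j - xbar j) ^ 2)
            + Lbar i / p i * (2 * D z i * (z i - xbar i) + D z i ^ 2) := by
        intro i
        have hterm : ∀ j, Lbar j / p j * ((stepD D z i) j - xbar j) ^ 2
            = Lbar j / p j * (z j - xbar j) ^ 2
              + (if j = i then Lbar i / p i * (2 * D z i * (z i - xbar i) + D z i ^ 2)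
                  else 0) := by
          intro j
          have hap : (stepD D z i) j = if j = i then z i + D z i else z j := happly z i (D z i) j
          rw [hap]
          by_cases h : j = i
          · subst h; simp; ring
          · simp [h]
        rw [Finset.sum_congr rfl (fun j _ => hterm j), Finset.sum_add_distrib,
          Finset.sum_ite_eq' Finset.univ i
            (fun _ => Lbar i / p i * (2 * D z i * (z i - xbar i) + D z i ^ 2))]
        simp
      calc ∑ i, p i * (∑ j, Lbar j / p j * ((stepD D z i) j - xbar j) ^ 2)
          = ∑ i, (p i * (∑ j, Lbar j / p j * (z j - xbar j) ^ 2)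
              + Lbar i * (2 * D z i * (z i - xbar i) + D z i ^ 2)) := by
            refine Finset.sum_congr rfl (fun i _ => ?_)
            rw [hsingle i, mul_add]
            congr 1
            rw [← mul_assoc, mul_div_assoc']
            rw [mul_comm (p i) (Lbar i), mul_div_assoc, div_self (hppos i).ne', mul_one]
        _ = (∑ j, Lbar j / p j * (z j - xbar j) ^ 2)
              + ∑ i, Lbar i * (2 * D z i * (z i - xbar i) + D z i ^ 2) := by
            rw [Finset.sum_add_distrib, ← Finset.sum_mul, hpsum, one_mul]
    -- expected F after one step, refined with pmin
    have hEF : (∑ i, p i * F (stepD D z i)) ≤ F z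
        + pmin * ∑ i, (f' z i * D z i + Lbar i / 2 * D z i ^ 2
            + ψ i (z i + D z i) - ψ i (z i)) := by
      have h1 : ∑ i, p i * F (stepD D z i)
          ≤ ∑ i, (p i * F z + pmin * (f' z i * D z i + Lbar i / 2 * D z i ^ 2
              + ψ i (z i + D z i) - ψ i (z i))) := by
        refine Finset.sum_le_sum (fun i _ => ?_)
        have h2 := hFstep z i
        have h3 := hDelta0 z i
        have h4 : p i * (f' z i * D z i + Lbar i / 2 * D z i ^ 2
            + ψ i (z i + D z i) - ψ i (z i))
            ≤ pmin * (f' z i * D z i + Lbar i / 2 * D z i ^ 2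
              + ψ i (z i + D z i) - ψ i (z i)) :=
          mul_le_mul_of_nonpos_right (hp i) h3
        have h5 : p i * F (stepD D z i) ≤ p i * (F z + (f' z i * D z i
            + Lbar i / 2 * D z i ^ 2 + ψ i (z i + D z i) - ψ i (z i))) :=
          mul_le_mul_of_nonneg_left h2 (hp0 i)
        nlinarith [h5, h4]
      rw [Finset.sum_add_distrib, ← Finset.sum_mul, hpsum, one_mul, ← Finset.mul_sum] at h1
      exact h1
    -- put everything together
    set S1 : ℝ := ∑ i, Lbar i * (D z i ^ 2 + D z i * (z i - xbar i)) with hS1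
    set S2 : ℝ := ∑ i, Lbar i * D z i ^ 2 with hS2
    set S3 : ℝ := ∑ i, (f' z i * D z i + ψ i (z i + D z i) - ψ i (z i)) with hS3
    have hT : ∑ i, Lbar i * (2 * D z i * (z i - xbar i) + D z i ^ 2) = 2 * S1 - S2 := by
      rw [hS1, hS2, Finset.mul_sum, ← Finset.sum_sub_distrib]
      exact Finset.sum_congr rfl (fun i _ => by ring)
    have hSd : ∑ i, (f' z i * D z i + Lbar i / 2 * D z i ^ 2
        + ψ i (z i + D z i) - ψ i (z i)) = S3 + S2 / 2 := by
      rw [hS3, hS2]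
      rw [Finset.sum_div, ← Finset.sum_add_distrib]
      exact Finset.sum_congr rfl (fun i _ => by ring)
    rw [hSd] at hEF
    rw [hRstep, hT]
    have hc : (0 : ℝ) < 2 / pmin := by positivity
    have hcp : (2 / pmin) * pmin = 2 := by field_simp
    have h6 : (2 / pmin) * ((∑ i, p i * F (stepD D z i)) - F z)
        ≤ 2 * (S3 + S2 / 2) := by
      calc (2 / pmin) * ((∑ i, p i * F (stepD D z i)) - F z)
          ≤ (2 / pmin) * (pmin * (S3 + S2 / 2)) :=
            mul_le_mul_of_nonneg_left (by linarith) hc.le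
        _ = 2 * (S3 + S2 / 2) := by rw [← mul_assoc, hcp]
    nlinarith [hsum1, h6]
  refine ⟨?_, ?_⟩
  · obtain ⟨ht, _⟩ := aux_main p (stepD D) x0 F
      (fun z => ∑ j, Lbar j / p j * (z j - xstar j) ^ 2)
      (F xstar) pmin hpmin hp0 hpsum hxstar (hR0 xstar) hdesc (hlyap xstar hxstar)
    exact ht
  · intro xbar hxbar
    obtain ⟨_, C, hC⟩ := aux_main p (stepD D) x0 F
      (fun z => ∑ j, Lbar j / p j * (z j - xbar j) ^ 2)
      (F xstar) pmin hpmin hp0 hpsum hxstar (hR0 xbar) hdesc (hlyap xbar hxbar)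
    exact ⟨C, hC⟩
end

section
/- Let f : ℝⁿ → ℝ be convex and differentiable with componentwise Lipschitz constants L₁,…,Lₙ > 0, ψ(x) = ∑_{i=1}^n ψᵢ(xᵢ) with each ψᵢ : ℝ → ℝ convex, F = f + ψ, x̄ a minimizer of F with F* = F(x̄), L̄ᵢ ≥ Lᵢ, and probabilities pᵢ ≥ p_min > 0 with ∑pᵢ = 1; set r(x)² = ∑ᵢ (L̄ᵢ/pᵢ)(xᵢ − x̄ᵢ)². For x ∈ ℝⁿ, let dᵢ minimize d ↦ ∇ᵢf(x)·d + (L̄ᵢ/2)d² + ψᵢ(xᵢ + d) for each i, and set x⁽ⁱ⁾ = x + dᵢ eᵢ. Then ∑_{i=1}^n pᵢ r(x⁽ⁱ⁾)² − r(x)² ≤ 2(F* − F(x)) + (2/p_min)( F(x) − ∑_{i=1}^n pᵢ F(x⁽ⁱ⁾) ). -/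
open Set Filter Topology Finset

section Helpers

/-- 1-D quadratic upper bound from Lipschitz-type derivative bound vs 0. -/
lemma quad_upper (φ φd : ℝ → ℝ) (hφ : ∀ s, HasDerivAt φ (φd s) s)
    (L : ℝ) (hlip : ∀ s, |φd s - φd 0| ≤ L * |s|) (t : ℝ) :
    φ t ≤ φ 0 + φd 0 * t + L / 2 * t ^ 2 := by
  set g : ℝ → ℝ := fun s => φ 0 + φd 0 * s + L / 2 * s ^ 2 - φ s with hgdef
  have hg : ∀ s, HasDerivAt g (φd 0 + L * s - φd s) s := by
    intro s
    have h1 : HasDerivAt (fun s : ℝ => φ 0 + φd 0 * s + L / 2 * s ^ 2)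
        (φd 0 + L * s) s := by
      have ha : HasDerivAt (fun s : ℝ => φd 0 * s) (φd 0) s := by
        simpa using (hasDerivAt_id s).const_mul (φd 0)
      have hb : HasDerivAt (fun s : ℝ => L / 2 * s ^ 2) (L / 2 * (2 * s ^ 1)) s :=
        (hasDerivAt_pow 2 s).const_mul (L / 2)
      have := ((hasDerivAt_const s (φ 0)).add ha).add hb
      exact this.congr_deriv (by ring)
    exact h1.sub (hφ s)
  have hdiff : Differentiable ℝ g := fun s => (hg s).differentiableAt
  have hderivg : ∀ s, deriv g s = φd 0 + L * s - φd s := fun s => (hg s).deriv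
  have hg0 : g 0 = 0 := by simp [hgdef]
  have key : 0 ≤ g t := by
    rcases le_or_gt 0 t with ht | ht
    · have hm : MonotoneOn g (Icc 0 t) := by
        apply monotoneOn_of_deriv_nonneg (convex_Icc 0 t)
          hdiff.continuous.continuousOn hdiff.differentiableOn
        intro s hs
        rw [interior_Icc] at hs
        rw [hderivg]
        have h := (hlip s)
        have habs : |s| = s := abs_of_nonneg hs.1.le
        rw [habs] at h
        have := (abs_le.1 h).2
        linarith
      have := hm (left_mem_Icc.2 ht) (right_mem_Icc.2 ht) ht
      linarith [hg0 ▸ this]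
    · have hm : AntitoneOn g (Icc t 0) := by
        apply antitoneOn_of_deriv_nonpos (convex_Icc t 0)
          hdiff.continuous.continuousOn hdiff.differentiableOn
        intro s hs
        rw [interior_Icc] at hs
        rw [hderivg]
        have h := (hlip s)
        have habs : |s| = -s := abs_of_nonpos hs.2.le
        rw [habs] at h
        have := (abs_le.1 h).1
        linarith
      have := hm (left_mem_Icc.2 ht.le) (right_mem_Icc.2 ht.le) ht.le
      linarith [hg0 ▸ this]
  simp only [hgdef] at key
  linarith

/-- Strong-convexity-type bound at the minimizer of convex + quadratic. -/
lemma strong_min (q : ℝ → ℝ) (hq : ConvexOn ℝ Set.univ q) (L : ℝ)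
    (d : ℝ) (hd : ∀ t, q d + L / 2 * d ^ 2 ≤ q t + L / 2 * t ^ 2) (t : ℝ) :
    q d + L / 2 * d ^ 2 + L / 2 * (t - d) ^ 2 ≤ q t + L / 2 * t ^ 2 := by
  have hstep : ∀ l : ℝ, l ∈ Ioo (0:ℝ) 1 →
      L / 2 * (1 - l) * (t - d) ^ 2 ≤ q t + L / 2 * t ^ 2 - (q d + L / 2 * d ^ 2) := by
    intro l hl
    have h1 := hd ((1 - l) * d + l * t)
    have h2 := hq.2 (Set.mem_univ d) (Set.mem_univ t) (by linarith [hl.1, hl.2] : (0:ℝ) ≤ 1 - l)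
      hl.1.le (by ring)
    simp only [smul_eq_mul] at h2
    have key : l * (L / 2 * (1 - l) * (t - d) ^ 2) ≤
        l * (q t + L / 2 * t ^ 2 - (q d + L / 2 * d ^ 2)) := by nlinarith [h1, h2]
    exact le_of_mul_le_mul_left key hl.1
  have htend : Tendsto (fun l : ℝ => L / 2 * (1 - l) * (t - d) ^ 2) (𝓝[>] (0:ℝ))
      (𝓝 (L / 2 * (t - d) ^ 2)) := by
    have hc : ContinuousAt (fun l : ℝ => L / 2 * (1 - l) * (t - d) ^ 2) 0 := by fun_prop
    have h : Tendsto (fun l : ℝ => L / 2 * (1 - l) * (t - d) ^ 2) (𝓝[>] (0:ℝ))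
        (𝓝 (L / 2 * (1 - 0) * (t - d) ^ 2)) := hc.tendsto.mono_left nhdsWithin_le_nhds
    simpa using h
  have hev : ∀ᶠ l in 𝓝[>] (0:ℝ),
      (fun l : ℝ => L / 2 * (1 - l) * (t - d) ^ 2) l ≤
        q t + L / 2 * t ^ 2 - (q d + L / 2 * d ^ 2) := by
    filter_upwards [Ioo_mem_nhdsGT_of_mem (by constructor <;> norm_num : (0:ℝ) ∈ Ico (0:ℝ) 1)]
      with l hl using hstep l hl
  have := le_of_tendsto htend hev
  linarith

/-- Gradient inequality for convex functions. -/
lemma convex_grad_ineq {E : Type*} [NormedAddCommGroup E] [InnerProductSpace ℝ E]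
    [CompleteSpace E]
    (f : E → ℝ) (f' : E → E) (hconv : ConvexOn ℝ Set.univ f)
    (hderiv : ∀ y, HasGradientAt f (f' y) y) (x y : E) :
    f x + inner ℝ (f' x) (y - x) ≤ f y := by
  set v := y - x with hv
  set φ : ℝ → ℝ := fun s => f (x + s • v) with hφdef
  have hline : ∀ s : ℝ, HasDerivAt (fun s : ℝ => x + s • v) v s := by
    intro s
    simpa using ((hasDerivAt_id s).smul_const v).const_add x
  have hφ : HasDerivAt φ (inner ℝ (f' x) v : ℝ) 0 := by
    have hfd : HasFDerivAt f (InnerProductSpace.toDual ℝ E (f' (x + (0:ℝ)•v))) (x + (0:ℝ)•v) :=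
      hderiv (x + (0:ℝ)•v)
    have := hfd.comp_hasDerivAt (0:ℝ) (hline 0)
    simpa [Function.comp_def] using this
  have hslope : ∀ s ∈ Ioo (0:ℝ) 1, slope φ 0 s ≤ f y - f x := by
    intro s hs
    have h2 := hconv.2 (Set.mem_univ x) (Set.mem_univ y) (by linarith [hs.2] : (0:ℝ) ≤ 1 - s)
      hs.1.le (by ring)
    have harg : (1 - s) • x + s • y = x + s • v := by
      rw [hv]; module
    rw [harg] at h2
    have hφs : φ s ≤ (1 - s) * f x + s * f y := by simpa [hφdef, smul_eq_mul] using h2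
    have hφ0 : φ 0 = f x := by simp [hφdef]
    rw [slope_def_field, hφ0]
    rw [div_le_iff₀ (by simpa using hs.1 : (0:ℝ) < s - 0)]
    nlinarith [hφs]
  have htend : Tendsto (slope φ 0) (𝓝[>] (0:ℝ)) (𝓝 (inner ℝ (f' x) v : ℝ)) := by
    have h := hasDerivAt_iff_tendsto_slope.1 hφ
    exact h.mono_left (nhdsWithin_mono 0 (fun s hs => ne_of_gt hs : Ioi (0:ℝ) ⊆ {0}ᶜ))
  have hev : ∀ᶠ s in 𝓝[>] (0:ℝ), slope φ 0 s ≤ f y - f x := by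
    filter_upwards [Ioo_mem_nhdsGT_of_mem (by constructor <;> norm_num : (0:ℝ) ∈ Ico (0:ℝ) 1)]
      with s hs using hslope s hs
  have := le_of_tendsto htend hev
  linarith
end Helpers


/-- Single-step averaged inequality for stochastic proximal
coordinate descent: with `r(x)² = ∑ᵢ (L̄ᵢ/pᵢ)(xᵢ − x̄ᵢ)²` and proximal coordinate
updates `x⁽ⁱ⁾ = x + dᵢ eᵢ`, we have
`∑ᵢ pᵢ r(x⁽ⁱ⁾)² − r(x)² ≤ 2(F* − F(x)) + (2/p_min)(F(x) − ∑ᵢ pᵢ F(x⁽ⁱ⁾))`. -/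
theorem proximal_coordinate_descent_one_step_bound
    {n : ℕ}
    (f : EuclideanSpace ℝ (Fin n) → ℝ)
    (f' : EuclideanSpace ℝ (Fin n) → EuclideanSpace ℝ (Fin n))
    (hconv : ConvexOn ℝ Set.univ f)
    (hderiv : ∀ y, HasGradientAt f (f' y) y)
    (Li : Fin n → ℝ) (hLi : ∀ i, 0 < Li i)
    (hcoordlip : ∀ (y : EuclideanSpace ℝ (Fin n)) (i : Fin n) (h : ℝ),
      |f' (y + h • EuclideanSpace.single i 1) i - f' y i| ≤ Li i * |h|)
    (Lbar : Fin n → ℝ) (hLbar : ∀ i, Li i ≤ Lbar i)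
    (ψ : Fin n → ℝ → ℝ) (hψconv : ∀ i, ConvexOn ℝ Set.univ (ψ i))
    (F : EuclideanSpace ℝ (Fin n) → ℝ) (hF : ∀ y, F y = f y + ∑ i, ψ i (y i))
    (xbar : EuclideanSpace ℝ (Fin n)) (hxbar : ∀ y, F xbar ≤ F y)
    (p : Fin n → ℝ) (pmin : ℝ) (hpmin : 0 < pmin)
    (hp : ∀ i, pmin ≤ p i) (hpsum : ∑ i, p i = 1)
    (R : EuclideanSpace ℝ (Fin n) → ℝ)
    (hR : ∀ z, R z = ∑ i, Lbar i / p i * (z i - xbar i) ^ 2)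
    (x : EuclideanSpace ℝ (Fin n))
    (d : Fin n → ℝ)
    (hd : ∀ i, ∀ t : ℝ,
      f' x i * d i + Lbar i / 2 * d i ^ 2 + ψ i (x i + d i) ≤
        f' x i * t + Lbar i / 2 * t ^ 2 + ψ i (x i + t))
    (xi : Fin n → EuclideanSpace ℝ (Fin n))
    (hxi : ∀ i, xi i = x + d i • EuclideanSpace.single i 1) :
    ∑ i, p i * R (xi i) - R x ≤
      2 * (F xbar - F x) + 2 / pmin * (F x - ∑ i, p i * F (xi i)) := by
  classical
  set Δ : Fin n → ℝ :=
    fun i => f' x i * d i + Lbar i / 2 * d i ^ 2 + ψ i (x i + d i) - ψ i (x i) with hΔ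
  have hppos : ∀ i, 0 < p i := fun i => lt_of_lt_of_le hpmin (hp i)
  have hcoord : ∀ i j, xi i j = x j + if j = i then d i else 0 := by
    intro i j; rw [hxi]
    simp [EuclideanSpace.single_apply, PiLp.add_apply, PiLp.smul_apply, mul_ite]
  -- (E6) Δ i ≤ 0
  have hΔle : ∀ i, Δ i ≤ 0 := by
    intro i
    have h := hd i 0
    simp only [mul_zero, add_zero] at h
    simp only [hΔ]
    nlinarith [h]
  -- (E7) descent: F (xi i) ≤ F x + Δ i
  have hFxi : ∀ i, F (xi i) ≤ F x + Δ i := by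
    intro i
    have hfdesc : f (xi i) ≤ f x + f' x i * d i + Li i / 2 * d i ^ 2 := by
      set φ : ℝ → ℝ := fun s => f (x + s • EuclideanSpace.single i 1) with hφdef
      set φd : ℝ → ℝ := fun s => f' (x + s • EuclideanSpace.single i 1) i with hφd
      have hφ : ∀ s, HasDerivAt φ (φd s) s := by
        intro s
        have hline : HasDerivAt (fun s : ℝ => x + s • EuclideanSpace.single i (1:ℝ))
            (EuclideanSpace.single i (1:ℝ)) s := by
          simpa using ((hasDerivAt_id s).smul_const (EuclideanSpace.single i (1:ℝ))).const_add x
        have h := ((hderiv _).hasFDerivAt).comp_hasDerivAt s hline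
        simpa [hφdef, hφd, InnerProductSpace.toDual_apply_apply, Function.comp_def,
          EuclideanSpace.inner_single_right] using h
      have hφd0 : φd 0 = f' x i := by simp [hφd]
      have hlip : ∀ s, |φd s - φd 0| ≤ Li i * |s| := by
        intro s; rw [hφd0]; simpa [hφd] using hcoordlip x i s
      have hq := quad_upper φ φd hφ (Li i) hlip (d i)
      have hφ0 : φ 0 = f x := by simp [hφdef]
      have hφdi : φ (d i) = f (xi i) := by rw [hφdef]; simp only; rw [← hxi]
      rw [hφ0, hφd0, hφdi] at hq; linarith
    have hψsum : ∑ j, ψ j (xi i j) = ∑ j, ψ j (x j) + (ψ i (x i + d i) - ψ i (x i)) := by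
      have h1 : ∑ j, (ψ j (xi i j) - ψ j (x j)) = ψ i (x i + d i) - ψ i (x i) := by
        rw [Finset.sum_eq_single i]
        · rw [hcoord]; simp
        · intro j _ hj; rw [hcoord]; simp [hj]
        · intro h; exact absurd (Finset.mem_univ i) h
      have h2 : ∑ j, (ψ j (xi i j) - ψ j (x j))
          = ∑ j, ψ j (xi i j) - ∑ j, ψ j (x j) := Finset.sum_sub_distrib _ _
      linarith
    have hLd : Li i / 2 * d i ^ 2 ≤ Lbar i / 2 * d i ^ 2 := by
      nlinarith [sq_nonneg (d i), hLbar i]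
    rw [hF (xi i), hF x]
    simp only [hΔ]
    rw [hψsum]
    linarith
  -- (E2) key inequality from the prox optimality
  have hE2 : ∀ i, Lbar i * d i * (x i - xbar i) ≤
      f' x i * (xbar i - x i) + ψ i (xbar i) - ψ i (x i + d i)
        - f' x i * d i - Lbar i * d i ^ 2 := by
    intro i
    set q : ℝ → ℝ := fun t => f' x i * t + ψ i (x i + t) with hqdef
    have hqconv : ConvexOn ℝ Set.univ q := by
      refine ⟨convex_univ, ?_⟩
      intro s _ t _ a b ha hb hab
      simp only [hqdef, smul_eq_mul]
      have h1 := (hψconv i).2 (Set.mem_univ (x i + s)) (Set.mem_univ (x i + t)) ha hb hab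
      simp only [smul_eq_mul] at h1
      have harg : a * (x i + s) + b * (x i + t) = x i + (a * s + b * t) := by
        linear_combination (x i) * hab
      rw [harg] at h1
      nlinarith [h1]
    have hmin : ∀ t, q (d i) + Lbar i / 2 * (d i) ^ 2 ≤ q t + Lbar i / 2 * t ^ 2 := by
      intro t; have := hd i t; simp only [hqdef]; linarith
    have hsm := strong_min q hqconv (Lbar i) (d i) hmin (xbar i - x i)
    simp only [hqdef] at hsm
    have harg2 : x i + (xbar i - x i) = xbar i := by ring
    rw [harg2] at hsm
    nlinarith [hsm]
  -- (E3) convexity of f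
  have hE3 : ∑ i, f' x i * (xbar i - x i) ≤ f xbar - f x := by
    have h := convex_grad_ineq f f' hconv hderiv x xbar
    have hi : (inner ℝ (f' x) (xbar - x) : ℝ) = ∑ j, f' x j * (xbar j - x j) := by
      simp [PiLp.inner_apply, RCLike.inner_apply, PiLp.sub_apply, mul_comm]
    rw [hi] at h; linarith
  -- (E1) expansion of the weighted distances
  have hRxi : ∀ i, R (xi i) = R x + Lbar i / p i * (d i ^ 2 + 2 * d i * (x i - xbar i)) := by
    intro i
    rw [hR, hR]
    have h1 : ∑ j, (Lbar j / p j * (xi i j - xbar j) ^ 2 - Lbar j / p j * (x j - xbar j) ^ 2)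
        = Lbar i / p i * (d i ^ 2 + 2 * d i * (x i - xbar i)) := by
      rw [Finset.sum_eq_single i]
      · rw [hcoord, if_pos rfl]; ring
      · intro j _ hj; rw [hcoord]; simp [hj]
      · intro h; exact absurd (Finset.mem_univ i) h
    have h2 : ∑ j, (Lbar j / p j * (xi i j - xbar j) ^ 2 - Lbar j / p j * (x j - xbar j) ^ 2)
        = ∑ j, Lbar j / p j * (xi i j - xbar j) ^ 2
          - ∑ j, Lbar j / p j * (x j - xbar j) ^ 2 := Finset.sum_sub_distrib _ _
    linarith
  have hsum1 : ∑ i, p i * R (xi i) - R x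
      = ∑ i, Lbar i * (d i ^ 2 + 2 * d i * (x i - xbar i)) := by
    have hterm : ∀ i, p i * R (xi i)
        = p i * R x + Lbar i * (d i ^ 2 + 2 * d i * (x i - xbar i)) := by
      intro i
      rw [hRxi i]
      have hpne : p i ≠ 0 := ne_of_gt (hppos i)
      field_simp
    rw [Finset.sum_congr rfl (fun i _ => hterm i), Finset.sum_add_distrib,
      ← Finset.sum_mul, hpsum]
    ring
  -- middle inequality
  have hmid : ∑ i, Lbar i * (d i ^ 2 + 2 * d i * (x i - xbar i))
      ≤ ∑ i, (2 * (f' x i * (xbar i - x i) + ψ i (xbar i) - ψ i (x i)) - 2 * Δ i) := by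
    apply Finset.sum_le_sum
    intro i _
    have h := hE2 i
    simp only [hΔ]
    nlinarith [h]
  have hmid2 : ∑ i, (2 * (f' x i * (xbar i - x i) + ψ i (xbar i) - ψ i (x i)) - 2 * Δ i)
      = 2 * ∑ i, (f' x i * (xbar i - x i) + ψ i (xbar i) - ψ i (x i)) - 2 * ∑ i, Δ i := by
    rw [Finset.sum_sub_distrib, ← Finset.mul_sum, ← Finset.mul_sum]
  have hA : ∑ i, (f' x i * (xbar i - x i) + ψ i (xbar i) - ψ i (x i)) ≤ F xbar - F x := by
    have h1 : ∑ i, (f' x i * (xbar i - x i) + ψ i (xbar i) - ψ i (x i))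
        = (∑ i, f' x i * (xbar i - x i) + ∑ i, ψ i (xbar i)) - ∑ i, ψ i (x i) := by
      rw [Finset.sum_sub_distrib, Finset.sum_add_distrib]
    rw [h1, hF xbar, hF x]
    linarith
  -- last piece: relate -∑Δ to F x - ∑ p F(xi)
  have hQ : pmin * ∑ i, (-Δ i) ≤ F x - ∑ i, p i * F (xi i) := by
    have h1 : ∀ i, pmin * (-Δ i) ≤ p i * F x - p i * F (xi i) := by
      intro i
      have h6 := hΔle i
      have h7 := hFxi i
      nlinarith [mul_nonneg (sub_nonneg.2 (hp i)) (neg_nonneg.2 h6),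
        mul_nonneg (le_of_lt (hppos i)) (by linarith : (0:ℝ) ≤ F x - F (xi i) + Δ i)]
    have h3 : ∑ i, (p i * F x - p i * F (xi i)) = F x - ∑ i, p i * F (xi i) := by
      rw [Finset.sum_sub_distrib, ← Finset.sum_mul, hpsum, one_mul]
    rw [Finset.mul_sum, ← h3]
    exact Finset.sum_le_sum fun i _ => h1 i
  have hfinal : 2 * (- ∑ i, Δ i) ≤ 2 / pmin * (F x - ∑ i, p i * F (xi i)) := by
    have h := mul_le_mul_of_nonneg_left hQ
      (le_of_lt (by positivity : (0:ℝ) < 2 / pmin))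
    have heq : 2 / pmin * (pmin * ∑ i, (-Δ i)) = 2 * ∑ i, (-Δ i) := by
      field_simp
    rw [heq] at h
    have hsneg : ∑ i, (-Δ i) = - ∑ i, Δ i := by
      simp [Finset.sum_neg_distrib]
    rw [hsneg] at h
    exact h
  linarith [hsum1, hmid, hmid2, hA, hfinal]
end
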